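/- Stanley's transfer map φ, defined by φ(x)_p = x_p − max{x_q : q covered by p} (with the max over the empty set taken to be 0, using the convention that q ⋖ p means q is covered by p), maps the order polytope O(P,1) bijectively onto the chain polytope C(P,1); consequently O(P,1) and C(P,1) are Ehrhart-equivalent. -/

import Mathlib

/-- The dilated order polytope `O(P,r)`. -/
def orderPolytope (P : Type*) [PartialOrder P] (r : ℝ) : Set (P → ℝ) :=
  {x | (∀ p, 0 ≤ x p ∧ x p ≤ r) ∧ ∀ p q : P, p ≤ q → x p ≤ x q}

/-- The dilated chain polytope `C(P,r)`. -/
def chainPolytope (P : Type*) [PartialOrder P] (r : ℝ) : Set (P → ℝ) :=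
  {x | (∀ p, 0 ≤ x p) ∧
    ∀ C : Finset P, IsChain (· ≤ ·) (C : Set P) → ∑ p ∈ C, x p ≤ r}

/-- `x` is a lattice (integral) point. -/
def isLatticePoint {P : Type*} (x : P → ℝ) : Prop := ∀ p, ∃ m : ℤ, x p = m

/-- Characteristic function of a finite subset. -/
def chi {P : Type*} [DecidableEq P] (A : Finset P) : P → ℝ :=
  fun p => if p ∈ A then 1 else 0


/-- Stanley's transfer map: `φ(x)_p = x_p - max {x_q : q ⋖ p}` (empty max is `0`). -/
noncomputable def transfer {P : Type*} [PartialOrder P] (x : P → ℝ) : P → ℝ :=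
  fun p => x p - ⨆ q : {q : P // q ⋖ p}, x q.1

set_option linter.unusedSectionVars false

section Aux

variable {P : Type*} [PartialOrder P] [Fintype P]
attribute [local instance] Classical.propDecidable

open Classical in
/-- Chains containing `p` as maximum. -/
noncomputable def goodChains (p : P) : Finset (Finset P) :=
  Finset.univ.filter (fun C => p ∈ C ∧ (∀ q ∈ C, q ≤ p) ∧ IsChain (· ≤ ·) (C : Set P))

lemma mem_goodChains {p : P} {C : Finset P} :
    C ∈ goodChains p ↔ p ∈ C ∧ (∀ q ∈ C, q ≤ p) ∧ IsChain (· ≤ ·) (C : Set P) := by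
  classical
  simp [goodChains]

lemma singleton_mem_goodChains (p : P) : ({p} : Finset P) ∈ goodChains p := by
  refine mem_goodChains.2 ⟨Finset.mem_singleton_self p, ?_, ?_⟩
  · intro q hq; simp_all
  · intro a ha b hb hab; simp_all

lemma goodChains_nonempty (p : P) : (goodChains p).Nonempty :=
  ⟨{p}, singleton_mem_goodChains p⟩

/-- Inverse of the transfer map. -/
noncomputable def invTransfer (y : P → ℝ) (p : P) : ℝ :=
  (goodChains p).sup' (goodChains_nonempty p) (fun C => ∑ q ∈ C, y q)

/-- The sup over covers. -/
noncomputable def supCov (x : P → ℝ) (p : P) : ℝ := ⨆ q : {q : P // q ⋖ p}, x q.1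

lemma transfer_eq (x : P → ℝ) (p : P) : transfer x p = x p - supCov x p := rfl

lemma supCov_of_isEmpty {p : P} (h : IsEmpty {q : P // q ⋖ p}) (x : P → ℝ) :
    supCov x p = 0 := by
  rw [supCov, iSup, Set.range_eq_empty, Real.sSup_empty]

lemma le_supCov {x : P → ℝ} {p q : P} (h : q ⋖ p) : x q ≤ supCov x p :=
  le_ciSup (f := fun q : {q : P // q ⋖ p} => x q.1)
    (Set.Finite.bddAbove (Set.finite_range _)) ⟨q, h⟩

lemma supCov_le {x : P → ℝ} {p : P} {a : ℝ} (h0 : 0 ≤ a)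
    (h : ∀ q, q ⋖ p → x q ≤ a) : supCov x p ≤ a := by
  by_cases hne : Nonempty {q : P // q ⋖ p}
  · exact ciSup_le fun q => h q.1 q.2
  · rw [supCov_of_isEmpty (not_nonempty_iff.1 hne)]; exact h0

lemma supCov_exists {x : P → ℝ} {p : P} (hne : Nonempty {q : P // q ⋖ p}) :
    ∃ q, q ⋖ p ∧ supCov x p = x q := by
  obtain ⟨q0, hq0⟩ := Finite.exists_max (fun q : {q : P // q ⋖ p} => x q.1)
  exact ⟨q0.1, q0.2, le_antisymm (ciSup_le hq0) (le_supCov q0.2)⟩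

/-- A nonempty finite chain has a maximum. -/
lemma chain_exists_max {C : Finset P} (hC : IsChain (· ≤ ·) (C : Set P)) (hne : C.Nonempty) :
    ∃ m ∈ C, ∀ q ∈ C, q ≤ m := by
  obtain ⟨m, hm, hmax⟩ := C.exists_maximal hne
  refine ⟨m, hm, fun q hq => ?_⟩
  rcases eq_or_ne q m with rfl | hne'
  · exact le_rfl
  · rcases hC hq hm hne' with h | h
    · exact h
    · exact hmax hq h

end Aux

section Main

variable {P : Type*} [PartialOrder P] [Fintype P]
attribute [local instance] Classical.propDecidable

lemma supCov_nonneg {x : P → ℝ} (h0 : ∀ p, 0 ≤ x p) (p : P) : 0 ≤ supCov x p := by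
  by_cases hne : Nonempty {q : P // q ⋖ p}
  · obtain ⟨q⟩ := hne
    exact le_trans (h0 q.1) (le_supCov q.2)
  · rw [supCov_of_isEmpty (not_nonempty_iff.1 hne)]

lemma insert_mem_goodChains {p p' : P} {C : Finset P} (hC : C ∈ goodChains p)
    (hlt : p < p') : insert p' C ∈ goodChains p' ∧ p' ∉ C := by
  obtain ⟨hmem, hle, hchain⟩ := mem_goodChains.1 hC
  have hnot : p' ∉ C := fun h => absurd (hle p' h) (not_le_of_gt hlt)
  refine ⟨mem_goodChains.2 ⟨Finset.mem_insert_self _ _, ?_, ?_⟩, hnot⟩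
  · intro q hq
    rcases Finset.mem_insert.1 hq with rfl | hq
    · exact le_rfl
    · exact le_trans (hle q hq) hlt.le
  · rw [Finset.coe_insert]
    exact hchain.insert fun b hb _ => Or.inr (le_trans (hle b hb) hlt.le)

/-- Telescoping bound: sum of transfer over a chain with maximum `m` is at most `x m`. -/
lemma sum_transfer_le_max {x : P → ℝ} (h0 : ∀ p, 0 ≤ x p)
    (hmono : ∀ p q : P, p ≤ q → x p ≤ x q) :
    ∀ n (C : Finset P), C.card = n → IsChain (· ≤ ·) (C : Set P) →
      ∀ m ∈ C, (∀ q ∈ C, q ≤ m) → ∑ q ∈ C, transfer x q ≤ x m := by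
  intro n
  induction n using Nat.strong_induction_on with
  | _ n IH =>
    intro C hcard hC m hm hmax
    by_cases hC' : (C.erase m).Nonempty
    · have hchain' : IsChain (· ≤ ·) ((C.erase m : Finset P) : Set P) :=
        hC.mono (by intro q hq; exact Finset.mem_of_mem_erase (by exact_mod_cast hq))
      obtain ⟨m', hm', hmax'⟩ := chain_exists_max hchain' hC'
      have hm'ltm : m' < m :=
        lt_of_le_of_ne (hmax m' (Finset.mem_of_mem_erase hm')) (Finset.ne_of_mem_erase hm')
      obtain ⟨q', hq'le, hq'cov⟩ := exists_le_covBy_of_lt hm'ltm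
      have hsum' : ∑ q ∈ C.erase m, transfer x q ≤ x m' := by
        refine IH (C.erase m).card ?_ _ rfl hchain' m' hm'
          (fun q hq => hmax' q hq)
        rw [← hcard]
        exact Finset.card_erase_lt_of_mem hm
      have htm : transfer x m ≤ x m - x m' := by
        rw [transfer_eq]
        have : x m' ≤ supCov x m := le_trans (hmono _ _ hq'le) (le_supCov hq'cov)
        linarith
      calc ∑ q ∈ C, transfer x q = transfer x m + ∑ q ∈ C.erase m, transfer x q :=
            (Finset.add_sum_erase C _ hm).symm
        _ ≤ (x m - x m') + x m' := add_le_add htm hsum'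
        _ = x m := by ring
    · have : C = {m} := by
        apply Finset.eq_singleton_iff_unique_mem.2
        refine ⟨hm, fun q hq => ?_⟩
        by_contra hne
        exact hC' ⟨q, Finset.mem_erase.2 ⟨hne, hq⟩⟩
      rw [this, Finset.sum_singleton, transfer_eq]
      have := supCov_nonneg h0 m
      linarith

lemma transfer_mem_chainPolytope {r : ℝ} (hr : 0 ≤ r) {x : P → ℝ}
    (hx : x ∈ orderPolytope P r) : transfer x ∈ chainPolytope P r := by
  obtain ⟨hbd, hmono⟩ := hx
  have h0 : ∀ p, 0 ≤ x p := fun p => (hbd p).1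
  constructor
  · intro p
    rw [transfer_eq, sub_nonneg]
    exact supCov_le (h0 p) fun q hq => hmono _ _ hq.le
  · intro C hC
    rcases C.eq_empty_or_nonempty with rfl | hne
    · simpa using hr
    · obtain ⟨m, hm, hmax⟩ := chain_exists_max hC hne
      exact le_trans (sum_transfer_le_max h0 hmono C.card C rfl hC m hm hmax)
        (hbd m).2

/-- For a monotone `x` there is a chain achieving `x p` as sum of transfers. -/
lemma exists_chain_sum_transfer {x : P → ℝ} (p : P) :
    ∃ C ∈ goodChains p, ∑ q ∈ C, transfer x q = x p := by
  induction p using (wellFounded_lt (α := P)).induction with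
  | _ p IH =>
    by_cases hne : Nonempty {q : P // q ⋖ p}
    · obtain ⟨q0, hq0cov, hq0⟩ := supCov_exists (x := x) hne
      obtain ⟨C', hC', hsum⟩ := IH q0 hq0cov.lt
      obtain ⟨hmemC, hnot⟩ := insert_mem_goodChains hC' hq0cov.lt
      refine ⟨insert p C', hmemC, ?_⟩
      rw [Finset.sum_insert hnot, hsum, transfer_eq, hq0]
      ring
    · refine ⟨{p}, singleton_mem_goodChains p, ?_⟩
      rw [Finset.sum_singleton, transfer_eq, supCov_of_isEmpty (not_nonempty_iff.1 hne)]
      ring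

lemma le_invTransfer {y : P → ℝ} {p : P} {C : Finset P} (hC : C ∈ goodChains p) :
    ∑ q ∈ C, y q ≤ invTransfer y p :=
  Finset.le_sup' (fun C => ∑ q ∈ C, y q) hC

lemma invTransfer_le {y : P → ℝ} {p : P} {a : ℝ}
    (h : ∀ C ∈ goodChains p, ∑ q ∈ C, y q ≤ a) : invTransfer y p ≤ a :=
  Finset.sup'_le _ _ h

lemma invTransfer_exists (y : P → ℝ) (p : P) :
    ∃ C ∈ goodChains p, invTransfer y p = ∑ q ∈ C, y q := by
  obtain ⟨C, hC, h⟩ := Finset.exists_mem_eq_sup' (goodChains_nonempty p)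
    (fun C => ∑ q ∈ C, y q)
  exact ⟨C, hC, h⟩

lemma invTransfer_mem_orderPolytope {r : ℝ} {y : P → ℝ}
    (hy : y ∈ chainPolytope P r) : invTransfer y ∈ orderPolytope P r := by
  obtain ⟨h0, hch⟩ := hy
  refine ⟨fun p => ⟨?_, ?_⟩, ?_⟩
  · exact le_trans (h0 p) (by simpa using le_invTransfer (singleton_mem_goodChains p))
  · exact invTransfer_le fun C hC => hch C (mem_goodChains.1 hC).2.2
  · intro p p' hle
    refine invTransfer_le fun C hC => ?_
    rcases eq_or_lt_of_le hle with rfl | hlt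
    · exact le_invTransfer hC
    · obtain ⟨hmem, hnot⟩ := insert_mem_goodChains hC hlt
      calc ∑ q ∈ C, y q ≤ y p' + ∑ q ∈ C, y q := le_add_of_nonneg_left (h0 p')
        _ = ∑ q ∈ insert p' C, y q := (Finset.sum_insert hnot).symm
        _ ≤ invTransfer y p' := le_invTransfer hmem

lemma invTransfer_nonneg {y : P → ℝ} (h0 : ∀ p, 0 ≤ y p) (p : P) :
    0 ≤ invTransfer y p :=
  le_trans (h0 p) (by simpa using le_invTransfer (singleton_mem_goodChains p))

lemma transfer_invTransfer {y : P → ℝ} (h0 : ∀ p, 0 ≤ y p) :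
    transfer (invTransfer y) = y := by
  set x := invTransfer y with hxdef
  have hx0 : ∀ p, 0 ≤ x p := invTransfer_nonneg h0
  have hxy : ∀ p, y p ≤ x p := fun p => by
    simpa using le_invTransfer (y := y) (singleton_mem_goodChains p)
  have hmono : ∀ p p' : P, p ≤ p' → x p ≤ x p' := by
    intro p p' hle
    refine invTransfer_le fun C hC => ?_
    rcases eq_or_lt_of_le hle with rfl | hlt
    · exact le_invTransfer hC
    · obtain ⟨hmem, hnot⟩ := insert_mem_goodChains hC hlt
      calc ∑ q ∈ C, y q ≤ y p' + ∑ q ∈ C, y q := le_add_of_nonneg_left (h0 p')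
        _ = ∑ q ∈ insert p' C, y q := (Finset.sum_insert hnot).symm
        _ ≤ invTransfer y p' := le_invTransfer hmem
  funext p
  rw [transfer_eq]
  have hub : supCov x p ≤ x p - y p := by
    refine supCov_le (by linarith [hxy p]) fun q hq => ?_
    obtain ⟨C, hC, hCsum⟩ := invTransfer_exists y q
    obtain ⟨hmem, hnot⟩ := insert_mem_goodChains hC hq.lt
    have : ∑ t ∈ insert p C, y t ≤ x p := le_invTransfer hmem
    rw [Finset.sum_insert hnot] at this
    rw [hxdef, hCsum]
    linarith
  have hlb : x p - y p ≤ supCov x p := by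
    obtain ⟨C, hC, hCsum⟩ := invTransfer_exists y p
    obtain ⟨hpC, hCle, hCchain⟩ := mem_goodChains.1 hC
    have hsplit : y p + ∑ q ∈ C.erase p, y q = ∑ q ∈ C, y q :=
      Finset.add_sum_erase C y hpC
    by_cases hD : (C.erase p).Nonempty
    · have hchainD : IsChain (· ≤ ·) ((C.erase p : Finset P) : Set P) :=
        hCchain.mono (by intro q hq; exact Finset.mem_of_mem_erase (by exact_mod_cast hq))
      obtain ⟨m, hmD, hmmax⟩ := chain_exists_max hchainD hD
      have hmltp : m < p :=
        lt_of_le_of_ne (hCle m (Finset.mem_of_mem_erase hmD)) (Finset.ne_of_mem_erase hmD)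
      obtain ⟨q', hq'le, hq'cov⟩ := exists_le_covBy_of_lt hmltp
      have hDgood : C.erase p ∈ goodChains m :=
        mem_goodChains.2 ⟨hmD, hmmax, hchainD⟩
      have h1 : ∑ q ∈ C.erase p, y q ≤ x m := le_invTransfer hDgood
      have h2 : x m ≤ supCov x p := le_trans (hmono _ _ hq'le) (le_supCov hq'cov)
      rw [hxdef] at *
      rw [hCsum, ← hsplit]
      linarith
    · have : C = {p} := by
        apply Finset.eq_singleton_iff_unique_mem.2
        refine ⟨hpC, fun q hq => ?_⟩
        by_contra hne
        exact hD ⟨q, Finset.mem_erase.2 ⟨hne, hq⟩⟩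
      rw [hxdef, hCsum, this, Finset.sum_singleton]
      simpa using supCov_nonneg hx0 p
  linarith

lemma transfer_injOn {r : ℝ} :
    Set.InjOn (transfer (P := P)) (orderPolytope P r) := by
  intro x hx y hy hxy
  funext p
  induction p using (wellFounded_lt (α := P)).induction with
  | _ p IH =>
    have hsup : supCov x p = supCov y p := by
      unfold supCov
      congr 1
      funext q
      exact IH q.1 q.2.lt
    have := congrFun hxy p
    rw [transfer_eq, transfer_eq, hsup] at this
    linarith

lemma transfer_bijOn {r : ℝ} (hr : 0 ≤ r) :
    Set.BijOn (transfer (P := P)) (orderPolytope P r) (chainPolytope P r) := by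
  refine ⟨fun x hx => transfer_mem_chainPolytope hr hx, transfer_injOn, ?_⟩
  intro y hy
  exact ⟨invTransfer y, invTransfer_mem_orderPolytope hy, transfer_invTransfer hy.1⟩

lemma transfer_lattice {x : P → ℝ} (hx : isLatticePoint x) :
    isLatticePoint (transfer x) := by
  intro p
  rw [transfer_eq]
  by_cases hne : Nonempty {q : P // q ⋖ p}
  · obtain ⟨q, _, hq⟩ := supCov_exists (x := x) hne
    obtain ⟨a, ha⟩ := hx p
    obtain ⟨b, hb⟩ := hx q
    exact ⟨a - b, by rw [hq, ha, hb]; push_cast; ring⟩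
  · obtain ⟨a, ha⟩ := hx p
    rw [supCov_of_isEmpty (not_nonempty_iff.1 hne)]
    exact ⟨a, by rw [ha]; ring⟩

lemma invTransfer_lattice {y : P → ℝ} (hy : isLatticePoint y) :
    isLatticePoint (invTransfer y) := by
  intro p
  obtain ⟨C, _, hC⟩ := invTransfer_exists y p
  choose m hm using hy
  refine ⟨∑ q ∈ C, m q, ?_⟩
  rw [hC]
  push_cast
  exact Finset.sum_congr rfl fun q _ => hm q

end Main

/-- the transfer map is a bijection from `O(P,1)` onto `C(P,1)`;
consequently the two polytopes are Ehrhart equivalent. -/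
theorem transfer_map_bijOn (P : Type*) [PartialOrder P] [Fintype P] :
    Set.BijOn (transfer (P := P)) (orderPolytope P 1) (chainPolytope P 1) ∧
    ∀ r : ℕ, 0 < r →
      {x ∈ orderPolytope P (r : ℝ) | isLatticePoint x}.ncard
        = {x ∈ chainPolytope P (r : ℝ) | isLatticePoint x}.ncard := by
  constructor
  · exact transfer_bijOn zero_le_one
  · intro r hr
    have hr' : (0:ℝ) ≤ r := Nat.cast_nonneg r
    have himg : {x ∈ chainPolytope P (r:ℝ) | isLatticePoint x}
        = transfer '' {x ∈ orderPolytope P (r:ℝ) | isLatticePoint x} := by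
      ext y
      constructor
      · rintro ⟨hy, hl⟩
        exact ⟨invTransfer y, ⟨invTransfer_mem_orderPolytope hy, invTransfer_lattice hl⟩,
          transfer_invTransfer hy.1⟩
      · rintro ⟨x, ⟨hx, hl⟩, rfl⟩
        exact ⟨transfer_mem_chainPolytope hr' hx, transfer_lattice hl⟩
    rw [himg, Set.ncard_image_of_injOn
      (Set.InjOn.mono (fun x hx => hx.1) (transfer_injOn (r := (r:ℝ))))]
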